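/- arXiv:2411.00569 — 4 statements merged into one kernel-verified Lean document; each statement's English description precedes it below -/
import Mathlib

section
/- Let n ≥ 1. Let K : ℝⁿ → Matrix (Fin n) (Fin n) ℝ be a C¹ map with K(x) symmetric for every x, let V, W : ℝⁿ → ℝ be C¹, and let ρ : ℝⁿ → ℝⁿ be continuous. Define H(x,p) = ∑_i p_i² + V(x) and F(x,p) = ∑_{i,j} K_{ij}(x) p_i p_j + W(x). Then the identity {F,H}(x,p) = 2 (∑_k ρ_k(x) p_k) · H(x,p) holds for all (x,p) ∈ ℝⁿ × ℝⁿ if and only if for every x and all indices i,j,k: (i) ∂K_{ij}/∂x^k + ∂K_{jk}/∂x^i + ∂K_{ki}/∂x^j = ρ_k δ_{ij} + ρ_i δ_{jk} + ρ_j δ_{ki} (the flat conformal Killing tensor equation), and (ii) ∂W/∂x^i = ∑_j K_{ij} ∂V/∂x^j + V ρ_i. -/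
open scoped BigOperators

/-- Partial derivative of a function on ℝⁿ in the `i`-th coordinate direction. -/
noncomputable def pd {n : ℕ} (i : Fin n) (f : (Fin n → ℝ) → ℝ) (x : Fin n → ℝ) : ℝ :=
  fderiv ℝ f x (Pi.single i 1)

/-- Partial derivative in the `x^i` direction of a function on phase space ℝⁿ × ℝⁿ. -/
noncomputable def pdx {n : ℕ} (i : Fin n)
    (F : (Fin n → ℝ) × (Fin n → ℝ) → ℝ) (z : (Fin n → ℝ) × (Fin n → ℝ)) : ℝ :=
  fderiv ℝ F z (Pi.single i 1, 0)

/-- Partial derivative in the `p_i` direction of a function on phase space ℝⁿ × ℝⁿ. -/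
noncomputable def pdp {n : ℕ} (i : Fin n)
    (F : (Fin n → ℝ) × (Fin n → ℝ) → ℝ) (z : (Fin n → ℝ) × (Fin n → ℝ)) : ℝ :=
  fderiv ℝ F z (0, Pi.single i 1)

/-- Canonical Poisson bracket on ℝⁿ × ℝⁿ. -/
noncomputable def poisson {n : ℕ}
    (F G : (Fin n → ℝ) × (Fin n → ℝ) → ℝ) (z : (Fin n → ℝ) × (Fin n → ℝ)) : ℝ :=
  ∑ i : Fin n, (pdx i F z * pdp i G z - pdp i F z * pdx i G z)

/-- Kronecker delta. -/
def kdelta {n : ℕ} (i j : Fin n) : ℝ := if i = j then 1 else 0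

section
variable {n : ℕ}

def T3 (A : Fin n → Fin n → Fin n → ℝ) (p q s : Fin n → ℝ) : ℝ :=
  ∑ k : Fin n, ∑ i : Fin n, ∑ j : Fin n, A i j k * p i * q j * s k

lemma sum_rot (f : Fin n → Fin n → Fin n → ℝ) :
    (∑ i : Fin n, ∑ j : Fin n, ∑ k : Fin n, f i j k)
      = ∑ j : Fin n, ∑ k : Fin n, ∑ i : Fin n, f i j k := by
  rw [Finset.sum_comm]
  exact Finset.sum_congr rfl fun _ _ => Finset.sum_comm

lemma T3_add1 (A : Fin n → Fin n → Fin n → ℝ) (p p' q s : Fin n → ℝ) :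
    T3 A (p + p') q s = T3 A p q s + T3 A p' q s := by
  simp [T3, mul_add, add_mul, Finset.sum_add_distrib]

lemma T3_add2 (A : Fin n → Fin n → Fin n → ℝ) (p q q' s : Fin n → ℝ) :
    T3 A p (q + q') s = T3 A p q s + T3 A p q' s := by
  simp [T3, mul_add, add_mul, Finset.sum_add_distrib]

lemma T3_add3 (A : Fin n → Fin n → Fin n → ℝ) (p q s s' : Fin n → ℝ) :
    T3 A p q (s + s') = T3 A p q s + T3 A p q s' := by
  simp [T3, mul_add, add_mul, Finset.sum_add_distrib]

lemma T3_basis (A : Fin n → Fin n → Fin n → ℝ) (i j k : Fin n) :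
    T3 A (Pi.single i 1) (Pi.single j 1) (Pi.single k 1) = A i j k := by
  simp [T3, Pi.single_apply, mul_ite, ite_mul, mul_zero, zero_mul, mul_one,
    Finset.sum_ite_eq', Finset.mem_univ]

lemma T3_perm_zero (A : Fin n → Fin n → Fin n → ℝ)
    (h : ∀ p : Fin n → ℝ, T3 A p p p = 0) (u v w : Fin n → ℝ) :
    T3 A u v w + T3 A u w v + T3 A v u w + T3 A v w u + T3 A w u v + T3 A w v u = 0 := by
  have e1 := h (u + v + w)
  have e2 := h (u + v)
  have e3 := h (u + w)
  have e4 := h (v + w)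
  have e5 := h u
  have e6 := h v
  have e7 := h w
  simp only [T3_add1, T3_add2, T3_add3] at e1 e2 e3 e4
  linarith

lemma algebra (a : Fin n → Fin n → Fin n → ℝ) (ha : ∀ i j k, a i j k = a j i k)
    (c : Fin n → Fin n → ℝ) (hc : ∀ i j, c i j = c j i)
    (w v r : Fin n → ℝ) (Vx : ℝ) :
    (∀ p : Fin n → ℝ,
        (∑ k : Fin n, (((∑ i : Fin n, ∑ j : Fin n, a i j k * p i * p j) + w k) * (2 * p k)
          - ((∑ i : Fin n, c i k * p i) + ∑ j : Fin n, c k j * p j) * v k))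
        = 2 * (∑ k : Fin n, r k * p k) * ((∑ i : Fin n, p i ^ 2) + Vx))
    ↔ ((∀ i j k, a i j k + a j k i + a k i j
          = r k * (if i = j then (1:ℝ) else 0) + r i * (if j = k then (1:ℝ) else 0)
            + r j * (if k = i then (1:ℝ) else 0))
        ∧ ∀ i, w i = (∑ j : Fin n, c i j * v j) + Vx * r i) := by
  classical
  set A : Fin n → Fin n → Fin n → ℝ :=
    fun i j k => a i j k - (if i = j then r k else 0) with hA
  set B : Fin n → ℝ := fun k => w k - (∑ j : Fin n, c k j * v j) - Vx * r k with hB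
  -- expansion of the cubic form
  have hTexp : ∀ p : Fin n → ℝ, T3 A p p p
      = ∑ k : Fin n, ((∑ i : Fin n, ∑ j : Fin n, a i j k * p i * p j) * p k
          - r k * p k * (∑ i : Fin n, p i ^ 2)) := by
    intro p
    unfold T3
    refine Finset.sum_congr rfl fun k _ => ?_
    have h1 : ∀ i : Fin n, (∑ j : Fin n, A i j k * p i * p j * p k)
        = (∑ j : Fin n, a i j k * p i * p j * p k) - r k * p i * p i * p k := by
      intro i
      rw [hA]
      simp only [sub_mul, ite_mul, zero_mul, Finset.sum_sub_distrib]
      congr 1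
      rw [Finset.sum_ite_eq _ i (fun j => r k * p i * p j * p k)]
      simp [mul_comm, mul_left_comm]
    rw [Finset.sum_congr rfl fun i _ => h1 i, Finset.sum_sub_distrib]
    congr 1
    · rw [Finset.sum_mul]
      exact Finset.sum_congr rfl fun i _ => by rw [Finset.sum_mul]
    · rw [Finset.mul_sum]
      exact Finset.sum_congr rfl fun i _ => by ring
  -- swap of the c-sums
  have hswap : ∀ p : Fin n → ℝ,
      (∑ k : Fin n, ((∑ i : Fin n, c i k * p i) + ∑ j : Fin n, c k j * p j) * v k)
        = ∑ k : Fin n, 2 * (∑ j : Fin n, c k j * v j) * p k := by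
    intro p
    have h1 : (∑ k : Fin n, (∑ i : Fin n, c i k * p i) * v k)
        = ∑ k : Fin n, (∑ j : Fin n, c k j * v j) * p k := by
      have : ∀ k : Fin n, (∑ i : Fin n, c i k * p i) * v k
          = ∑ i : Fin n, c i k * p i * v k := by
        intro k; rw [Finset.sum_mul]
      rw [Finset.sum_congr rfl fun k _ => this k, Finset.sum_comm]
      refine Finset.sum_congr rfl fun i _ => ?_
      rw [Finset.sum_mul]
      exact Finset.sum_congr rfl fun k _ => by ring
    have h2 : (∑ k : Fin n, (∑ j : Fin n, c k j * p j) * v k)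
        = ∑ k : Fin n, (∑ j : Fin n, c k j * v j) * p k := by
      have : ∀ k : Fin n, (∑ j : Fin n, c k j * p j) * v k
          = ∑ j : Fin n, c k j * p j * v k := by
        intro k; rw [Finset.sum_mul]
      rw [Finset.sum_congr rfl fun k _ => this k, Finset.sum_comm]
      refine Finset.sum_congr rfl fun j _ => ?_
      rw [Finset.sum_mul]
      refine Finset.sum_congr rfl fun k _ => by rw [hc k j]; ring
    calc (∑ k : Fin n, ((∑ i : Fin n, c i k * p i) + ∑ j : Fin n, c k j * p j) * v k)
        = (∑ k : Fin n, (∑ i : Fin n, c i k * p i) * v k)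
            + ∑ k : Fin n, (∑ j : Fin n, c k j * p j) * v k := by
          rw [← Finset.sum_add_distrib]
          exact Finset.sum_congr rfl fun k _ => by ring
      _ = ∑ k : Fin n, 2 * (∑ j : Fin n, c k j * v j) * p k := by
          rw [h1, h2, ← Finset.sum_add_distrib]
          exact Finset.sum_congr rfl fun k _ => by ring
  -- main reformulation
  have hmain : (∀ p : Fin n → ℝ,
        (∑ k : Fin n, (((∑ i : Fin n, ∑ j : Fin n, a i j k * p i * p j) + w k) * (2 * p k)
          - ((∑ i : Fin n, c i k * p i) + ∑ j : Fin n, c k j * p j) * v k))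
        = 2 * (∑ k : Fin n, r k * p k) * ((∑ i : Fin n, p i ^ 2) + Vx))
      ↔ (∀ p : Fin n → ℝ, T3 A p p p + (∑ k : Fin n, B k * p k) = 0) := by
    refine forall_congr' fun p => ?_
    have hkey : (∑ k : Fin n, (((∑ i : Fin n, ∑ j : Fin n, a i j k * p i * p j) + w k) * (2 * p k)
          - ((∑ i : Fin n, c i k * p i) + ∑ j : Fin n, c k j * p j) * v k))
        - 2 * (∑ k : Fin n, r k * p k) * ((∑ i : Fin n, p i ^ 2) + Vx)
        = 2 * (T3 A p p p + ∑ k : Fin n, B k * p k) := by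
      have hRHS : 2 * (∑ k : Fin n, r k * p k) * ((∑ i : Fin n, p i ^ 2) + Vx)
          = ∑ k : Fin n, 2 * (r k * p k) * ((∑ i : Fin n, p i ^ 2) + Vx) := by
        rw [mul_assoc, Finset.sum_mul, Finset.mul_sum]
        exact Finset.sum_congr rfl fun k _ => by ring
      rw [Finset.sum_sub_distrib, hswap p, hTexp p, hRHS, mul_add, Finset.mul_sum,
        Finset.mul_sum, ← Finset.sum_add_distrib, ← Finset.sum_sub_distrib,
        ← Finset.sum_sub_distrib]
      refine Finset.sum_congr rfl fun k _ => ?_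
      rw [hB]
      ring
    constructor
    · intro h; linarith [hkey]
    · intro h; linarith [hkey]
  rw [hmain]
  constructor
  · -- forward
    intro h
    -- separate cubic and linear parts
    have hcube : ∀ p : Fin n → ℝ, T3 A p p p = 0 := by
      intro p
      have h1 := h p
      have h2 := h (p + p)
      simp only [T3_add1, T3_add2, T3_add3, Pi.add_apply, mul_add,
        Finset.sum_add_distrib] at h2
      linarith
    have hlin : ∀ k, B k = 0 := by
      intro k
      have h1 := h (Pi.single k 1)
      have h2 := hcube (Pi.single k 1)
      rw [h2, zero_add] at h1
      simpa [Pi.single_apply, mul_ite, Finset.sum_ite_eq', Finset.mem_univ] using h1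
    constructor
    · intro i j k
      have h6 := T3_perm_zero A hcube (Pi.single i 1) (Pi.single j 1) (Pi.single k 1)
      simp only [T3_basis] at h6
      have hsymA : ∀ i j k : Fin n, A i j k = A j i k := by
        intro i j k
        rw [hA]
        simp only
        rw [ha i j k]
        congr 1
        simp [eq_comm]
      rw [hsymA i k j, hsymA j i k, hsymA k j i] at h6
      -- now h6 : A i j k + A k i j + A k i j? careful
      have hAijk : A i j k = a i j k - (if i = j then r k else 0) := rfl
      have hAjki : A j k i = a j k i - (if j = k then r i else 0) := rfl
      have hAkij : A k i j = a k i j - (if k = i then r j else 0) := rfl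
      simp only [hAijk, hAjki, hAkij] at h6
      simp only [mul_ite, mul_one, mul_zero]
      linarith
    · intro i
      have := hlin i
      rw [hB] at this
      simp only at this
      linarith
  · -- backward
    rintro ⟨h1, h2⟩ p
    have hB0 : ∀ k, B k = 0 := by
      intro k
      rw [hB]
      simp only
      rw [h2 k]
      ring
    have hA0 : ∀ i j k, A i j k + A j k i + A k i j = 0 := by
      intro i j k
      have h := h1 i j k
      simp only [mul_ite, mul_one, mul_zero] at h
      simp only [hA]
      linarith
    have hT0 : T3 A p p p = 0 := by
      have hY : (∑ k : Fin n, ∑ i : Fin n, ∑ j : Fin n, A j k i * p i * p j * p k)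
          = T3 A p p p := by
        rw [sum_rot fun k i j => A j k i * p i * p j * p k]
        unfold T3
        refine Finset.sum_congr rfl fun x _ => Finset.sum_congr rfl fun y _ =>
          Finset.sum_congr rfl fun z _ => by ring
      have hZ : (∑ k : Fin n, ∑ i : Fin n, ∑ j : Fin n, A k i j * p i * p j * p k)
          = T3 A p p p := by
        rw [sum_rot fun k i j => A k i j * p i * p j * p k,
          sum_rot fun i j k => A k i j * p i * p j * p k]
        unfold T3
        refine Finset.sum_congr rfl fun x _ => Finset.sum_congr rfl fun y _ =>
          Finset.sum_congr rfl fun z _ => by ring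
      have hsum : (∑ k : Fin n, ∑ i : Fin n, ∑ j : Fin n,
          (A i j k + A j k i + A k i j) * p i * p j * p k) = 0 := by
        refine Finset.sum_eq_zero fun k _ => Finset.sum_eq_zero fun i _ =>
          Finset.sum_eq_zero fun j _ => ?_
        rw [hA0 i j k]
        ring
      have hsplit : (∑ k : Fin n, ∑ i : Fin n, ∑ j : Fin n,
          (A i j k + A j k i + A k i j) * p i * p j * p k)
          = T3 A p p p
            + (∑ k : Fin n, ∑ i : Fin n, ∑ j : Fin n, A j k i * p i * p j * p k)
            + ∑ k : Fin n, ∑ i : Fin n, ∑ j : Fin n, A k i j * p i * p j * p k := by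
        unfold T3
        simp only [add_mul, Finset.sum_add_distrib]
      rw [hsplit, hY, hZ] at hsum
      linarith
    rw [hT0, zero_add]
    exact Finset.sum_eq_zero fun k _ => by rw [hB0 k]; ring

noncomputable def Li (i : Fin n) : ((Fin n → ℝ) × (Fin n → ℝ)) →L[ℝ] ℝ :=
  (ContinuousLinearMap.proj i).comp (ContinuousLinearMap.snd ℝ (Fin n → ℝ) (Fin n → ℝ))

lemma hasFDerivAt_H (V : (Fin n → ℝ) → ℝ) (hV : Differentiable ℝ V)
    (z : (Fin n → ℝ) × (Fin n → ℝ)) :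
    HasFDerivAt (fun z : (Fin n → ℝ) × (Fin n → ℝ) => (∑ i : Fin n, (z.2 i) ^ 2) + V z.1)
      ((∑ i : Fin n, ((2:ℕ) * z.2 i ^ 1) • Li i)
        + (fderiv ℝ V z.1).comp (ContinuousLinearMap.fst ℝ (Fin n → ℝ) (Fin n → ℝ))) z := by
  apply HasFDerivAt.add
  · apply HasFDerivAt.fun_sum
    intro i _
    have h := ((Li i).hasFDerivAt (x := z)).mul ((Li i).hasFDerivAt (x := z))
    simp only [Li, ContinuousLinearMap.coe_comp', Function.comp_apply,
      ContinuousLinearMap.coe_snd', ContinuousLinearMap.proj_apply] at h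
    have : ((2:ℕ) * z.2 i ^ 1 : ℝ) • Li i = z.2 i • Li i + z.2 i • Li i := by
      push_cast
      rw [pow_one, two_mul, add_smul]
    rw [this]
    convert h using 2 with w
    rfl
    · simp [pow_two]
    · rfl
    · rfl
  · exact ((hV z.1).hasFDerivAt).comp z (hasFDerivAt_fst)

lemma pdx_H (V : (Fin n → ℝ) → ℝ) (hV : Differentiable ℝ V)
    (z : (Fin n → ℝ) × (Fin n → ℝ)) (k : Fin n) :
    pdx k (fun z : (Fin n → ℝ) × (Fin n → ℝ) => (∑ i : Fin n, (z.2 i) ^ 2) + V z.1) z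
      = pd k V z.1 := by
  rw [pdx, (hasFDerivAt_H V hV z).fderiv]
  simp [Li, pd]

lemma pdp_H (V : (Fin n → ℝ) → ℝ) (hV : Differentiable ℝ V)
    (z : (Fin n → ℝ) × (Fin n → ℝ)) (k : Fin n) :
    pdp k (fun z : (Fin n → ℝ) × (Fin n → ℝ) => (∑ i : Fin n, (z.2 i) ^ 2) + V z.1) z
      = 2 * z.2 k := by
  rw [pdp, (hasFDerivAt_H V hV z).fderiv]
  simp [Li, Pi.single_apply, Finset.sum_ite_eq']
noncomputable def Dx (f : (Fin n → ℝ) → ℝ) (z : (Fin n → ℝ) × (Fin n → ℝ)) :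
    ((Fin n → ℝ) × (Fin n → ℝ)) →L[ℝ] ℝ :=
  (fderiv ℝ f z.1).comp (ContinuousLinearMap.fst ℝ (Fin n → ℝ) (Fin n → ℝ))

lemma hasFDerivAt_F (K : (Fin n → ℝ) → Matrix (Fin n) (Fin n) ℝ)
    (hK : ∀ i j, ContDiff ℝ 1 (fun x => K x i j))
    (W : (Fin n → ℝ) → ℝ) (hW : ContDiff ℝ 1 W)
    (z : (Fin n → ℝ) × (Fin n → ℝ)) :
    HasFDerivAt
      (fun z : (Fin n → ℝ) × (Fin n → ℝ) =>
        (∑ i : Fin n, ∑ j : Fin n, K z.1 i j * z.2 i * z.2 j) + W z.1)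
      ((∑ i : Fin n, ∑ j : Fin n,
          ((K z.1 i j * z.2 i) • Li j
            + z.2 j • ((K z.1 i j) • Li i + z.2 i • Dx (fun x => K x i j) z)))
        + Dx W z) z := by
  apply HasFDerivAt.add
  · apply HasFDerivAt.fun_sum
    intro i _
    apply HasFDerivAt.fun_sum
    intro j _
    have hKd : HasFDerivAt (fun z : (Fin n → ℝ) × (Fin n → ℝ) => K z.1 i j)
        (Dx (fun x => K x i j) z) z :=
      (((hK i j).differentiable one_ne_zero z.1).hasFDerivAt).comp z hasFDerivAt_fst
    have h1 : HasFDerivAt (fun z : (Fin n → ℝ) × (Fin n → ℝ) => K z.1 i j * z.2 i)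
        ((K z.1 i j) • Li i + z.2 i • Dx (fun x => K x i j) z) z :=
      hKd.mul ((Li i).hasFDerivAt (x := z))
    exact h1.mul ((Li j).hasFDerivAt (x := z))
  · exact (((hW.differentiable one_ne_zero) z.1).hasFDerivAt).comp z hasFDerivAt_fst

lemma pdx_F (K : (Fin n → ℝ) → Matrix (Fin n) (Fin n) ℝ)
    (hK : ∀ i j, ContDiff ℝ 1 (fun x => K x i j))
    (W : (Fin n → ℝ) → ℝ) (hW : ContDiff ℝ 1 W)
    (z : (Fin n → ℝ) × (Fin n → ℝ)) (k : Fin n) :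
    pdx k (fun z : (Fin n → ℝ) × (Fin n → ℝ) =>
        (∑ i : Fin n, ∑ j : Fin n, K z.1 i j * z.2 i * z.2 j) + W z.1) z
      = (∑ i : Fin n, ∑ j : Fin n, pd k (fun x => K x i j) z.1 * z.2 i * z.2 j)
          + pd k W z.1 := by
  rw [pdx, (hasFDerivAt_F K hK W hW z).fderiv]
  simp only [ContinuousLinearMap.add_apply, ContinuousLinearMap.coe_sum',
    Finset.sum_apply, ContinuousLinearMap.smul_apply, ContinuousLinearMap.add_apply,
    Li, Dx, ContinuousLinearMap.coe_comp', Function.comp_apply,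
    ContinuousLinearMap.coe_snd', ContinuousLinearMap.coe_fst',
    ContinuousLinearMap.proj_apply, pd]
  simp only [Pi.zero_apply, mul_zero, smul_eq_mul, zero_add]
  congr 1
  refine Finset.sum_congr rfl fun i _ => Finset.sum_congr rfl fun j _ => ?_
  ring

lemma pdp_F (K : (Fin n → ℝ) → Matrix (Fin n) (Fin n) ℝ)
    (hK : ∀ i j, ContDiff ℝ 1 (fun x => K x i j))
    (W : (Fin n → ℝ) → ℝ) (hW : ContDiff ℝ 1 W)
    (z : (Fin n → ℝ) × (Fin n → ℝ)) (k : Fin n) :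
    pdp k (fun z : (Fin n → ℝ) × (Fin n → ℝ) =>
        (∑ i : Fin n, ∑ j : Fin n, K z.1 i j * z.2 i * z.2 j) + W z.1) z
      = (∑ i : Fin n, K z.1 i k * z.2 i) + ∑ j : Fin n, K z.1 k j * z.2 j := by
  rw [pdp, (hasFDerivAt_F K hK W hW z).fderiv]
  simp only [ContinuousLinearMap.add_apply, ContinuousLinearMap.coe_sum',
    Finset.sum_apply, ContinuousLinearMap.smul_apply, ContinuousLinearMap.add_apply,
    Li, Dx, ContinuousLinearMap.coe_comp', Function.comp_apply,
    ContinuousLinearMap.coe_snd', ContinuousLinearMap.coe_fst',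
    ContinuousLinearMap.proj_apply, smul_eq_mul, map_zero, add_zero]
  simp only [Pi.single_apply, mul_ite, mul_one, mul_zero, Finset.sum_ite_eq',
    Finset.mem_univ, if_true, mul_zero, add_zero]
  have hsw : ∀ (f : Fin n → Fin n → ℝ),
      (∑ x : Fin n, ∑ y : Fin n, (if x = k then f x y else 0)) = ∑ y : Fin n, f k y := by
    intro f
    rw [Finset.sum_comm]
    simp [Finset.sum_ite_eq']
  simp only [Finset.sum_add_distrib, Finset.sum_ite_eq', Finset.mem_univ, if_true, hsw]
  exact congrArg₂ (· + ·) (Finset.sum_congr rfl fun i _ => by ring)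
    (Finset.sum_congr rfl fun j _ => by ring)

end

theorem stmt2 (n : ℕ) (hn : 1 ≤ n)
    (K : (Fin n → ℝ) → Matrix (Fin n) (Fin n) ℝ)
    (hK : ∀ i j, ContDiff ℝ 1 (fun x => K x i j))
    (hKsymm : ∀ x, (K x).IsSymm)
    (V W : (Fin n → ℝ) → ℝ) (hV : ContDiff ℝ 1 V) (hW : ContDiff ℝ 1 W)
    (ρ : (Fin n → ℝ) → Fin n → ℝ) (hρ : Continuous ρ)
    (H F : (Fin n → ℝ) × (Fin n → ℝ) → ℝ)
    (hH : ∀ z, H z = ∑ i : Fin n, (z.2 i) ^ 2 + V z.1)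
    (hF : ∀ z, F z = ∑ i : Fin n, ∑ j : Fin n, K z.1 i j * z.2 i * z.2 j + W z.1) :
    (∀ z : (Fin n → ℝ) × (Fin n → ℝ),
        poisson F H z = 2 * (∑ k : Fin n, ρ z.1 k * z.2 k) * H z)
      ↔ (∀ (x : Fin n → ℝ) (i j k : Fin n),
            pd k (fun x => K x i j) x + pd i (fun x => K x j k) x
              + pd j (fun x => K x k i) x
              = ρ x k * kdelta i j + ρ x i * kdelta j k + ρ x j * kdelta k i)
          ∧ (∀ (x : Fin n → ℝ) (i : Fin n),
              pd i W x = ∑ j : Fin n, K x i j * pd j V x + V x * ρ x i) := by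
  classical
  have hVd : Differentiable ℝ V := hV.differentiable one_ne_zero
  have hH' : H = fun z : (Fin n → ℝ) × (Fin n → ℝ) =>
      (∑ i : Fin n, (z.2 i) ^ 2) + V z.1 := funext hH
  have hF' : F = fun z : (Fin n → ℝ) × (Fin n → ℝ) =>
      (∑ i : Fin n, ∑ j : Fin n, K z.1 i j * z.2 i * z.2 j) + W z.1 := funext hF
  subst hH' hF'
  have hpe : ∀ z : (Fin n → ℝ) × (Fin n → ℝ),
      poisson (fun z : (Fin n → ℝ) × (Fin n → ℝ) =>
          (∑ i : Fin n, ∑ j : Fin n, K z.1 i j * z.2 i * z.2 j) + W z.1)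
        (fun z : (Fin n → ℝ) × (Fin n → ℝ) => (∑ i : Fin n, (z.2 i) ^ 2) + V z.1) z
      = ∑ k : Fin n,
          (((∑ i : Fin n, ∑ j : Fin n, pd k (fun x => K x i j) z.1 * z.2 i * z.2 j)
              + pd k W z.1) * (2 * z.2 k)
            - ((∑ i : Fin n, K z.1 i k * z.2 i) + ∑ j : Fin n, K z.1 k j * z.2 j)
                * pd k V z.1) := by
    intro z
    unfold poisson
    refine Finset.sum_congr rfl fun k _ => ?_
    rw [pdx_F K hK W hW, pdp_H V hVd, pdp_F K hK W hW, pdx_H V hVd]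
  have hKs : ∀ i j, (fun x' => K x' i j) = (fun x' => K x' j i) := by
    intro i j
    funext x'
    exact (hKsymm x').apply j i
  have key : ∀ x : Fin n → ℝ,
      (∀ p : Fin n → ℝ,
          poisson (fun z : (Fin n → ℝ) × (Fin n → ℝ) =>
              (∑ i : Fin n, ∑ j : Fin n, K z.1 i j * z.2 i * z.2 j) + W z.1)
            (fun z : (Fin n → ℝ) × (Fin n → ℝ) => (∑ i : Fin n, (z.2 i) ^ 2) + V z.1) (x, p)
          = 2 * (∑ k : Fin n, ρ x k * p k) * ((∑ i : Fin n, p i ^ 2) + V x))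
      ↔ ((∀ i j k, pd k (fun x => K x i j) x + pd i (fun x => K x j k) x
            + pd j (fun x => K x k i) x
            = ρ x k * kdelta i j + ρ x i * kdelta j k + ρ x j * kdelta k i)
          ∧ ∀ i, pd i W x = (∑ j : Fin n, K x i j * pd j V x) + V x * ρ x i) := by
    intro x
    have ha : ∀ i j k, pd k (fun x' => K x' i j) x = pd j (fun x' => K x' i k) x →
        True := fun _ _ _ _ => trivial
    have ha' : ∀ i j k : Fin n,
        pd k (fun x' => K x' i j) x = pd k (fun x' => K x' j i) x := by
      intro i j k
      rw [hKs i j]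
    have hcx : ∀ i j : Fin n, K x i j = K x j i := fun i j => (hKsymm x).apply j i
    have halg := algebra (fun i j k => pd k (fun x' => K x' i j) x) ha'
      (fun i j => K x i j) hcx (fun k => pd k W x) (fun k => pd k V x) (ρ x) (V x)
    refine Iff.trans (forall_congr' fun p => ?_) (halg.trans ?_)
    · rw [hpe (x, p)]
    · constructor
      · rintro ⟨h1, h2⟩
        exact ⟨fun i j k => by simpa [kdelta] using h1 i j k, h2⟩
      · rintro ⟨h1, h2⟩
        exact ⟨fun i j k => by simpa [kdelta] using h1 i j k, h2⟩
  constructor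
  · intro hz
    have h' := fun x => (key x).1 (fun p => hz (x, p))
    exact ⟨fun x => (h' x).1, fun x => (h' x).2⟩
  · rintro ⟨h1, h2⟩ z
    have := (key z.1).2 ⟨h1 z.1, h2 z.1⟩ z.2
    simpa using this
end

section
/- Let H : ℝⁿ × ℝⁿ → ℝ be C² and V : ℝⁿ → ℝ be C², nowhere zero; regard V as a function on ℝⁿ × ℝⁿ depending only on the x-variables, and set H̃ := H/V. Let γ : ℝ → ℝⁿ × ℝⁿ be a solution of Hamilton's equations for H̃ with H(γ(0)) = 0. Then: (a) H(γ(t)) = 0 for all t; (b) if τ : I → ℝ is differentiable on an interval I containing 0, with τ(0) = 0 and τ'(u) = V(x(τ(u))) where x(t) denotes the position component of γ(t), then the reparametrized curve σ := γ ∘ τ satisfies Hamilton's equations for H, i.e. σ'(u) = X_H(σ(u)) for all u ∈ I. -/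
open scoped BigOperators

/-- Hamiltonian vector field of `H` on ℝⁿ × ℝⁿ: `(∂H/∂p, −∂H/∂x)`. -/
noncomputable def hamVF {n : ℕ} (H : (Fin n → ℝ) × (Fin n → ℝ) → ℝ)
    (z : (Fin n → ℝ) × (Fin n → ℝ)) : (Fin n → ℝ) × (Fin n → ℝ) :=
  (fun i => pdp i H z, fun i => - pdx i H z)

lemma clm_apply_pair {n : ℕ} (L : ((Fin n → ℝ) × (Fin n → ℝ)) →L[ℝ] ℝ) (a b : Fin n → ℝ) :
    L (a, b) = (∑ i, a i * L (Pi.single i 1, 0)) + ∑ i, b i * L (0, Pi.single i 1) := by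
  have h1 : (a, b) = (∑ i, a i • ((Pi.single i 1 : Fin n → ℝ), (0 : Fin n → ℝ)))
      + ∑ i, b i • ((0 : Fin n → ℝ), (Pi.single i 1 : Fin n → ℝ)) := by
    refine Prod.ext ?_ ?_ <;>
      · simp only [Prod.fst_add, Prod.snd_add, Prod.fst_sum, Prod.snd_sum, Prod.smul_mk,
          smul_zero, Finset.sum_const_zero, add_zero, zero_add]
        funext j
        simp [Finset.sum_apply, Pi.single_apply, Finset.sum_ite_eq, Finset.sum_ite_eq']
  rw [h1, map_add, map_sum, map_sum]
  congr 1 <;> refine Finset.sum_congr rfl fun i _ => ?_ <;> rw [map_smul, smul_eq_mul]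

lemma linODE (f g : ℝ → ℝ) (hg : Continuous g) (hf : ∀ t, HasDerivAt f (f t * g t) t)
    (h0 : f 0 = 0) : ∀ t, f t = 0 := by
  set G := fun t => ∫ s in (0:ℝ)..t, g s with hGdef
  have hG : ∀ t, HasDerivAt G (g t) t := fun t =>
    intervalIntegral.integral_hasDerivAt_right (hg.intervalIntegrable _ _)
      (hg.stronglyMeasurableAtFilter _ _) hg.continuousAt
  have hh : ∀ t, HasDerivAt (fun t => f t * Real.exp (-G t)) 0 t := by
    intro t
    have hE : HasDerivAt (fun t => Real.exp (-G t)) (Real.exp (-G t) * -g t) t :=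
      ((hG t).neg).exp
    have := (hf t).mul hE
    exact this.congr_deriv (by ring)
  intro t
  have hconst := is_const_of_deriv_eq_zero (f := fun t => f t * Real.exp (-G t))
    (fun u => (hh u).differentiableAt) (fun u => (hh u).deriv) t 0
  rw [h0, zero_mul] at hconst
  rcases mul_eq_zero.mp hconst with h | h
  · exact h
  · exact absurd h (Real.exp_ne_zero _)

theorem stmt8 (n : ℕ)
    (H : (Fin n → ℝ) × (Fin n → ℝ) → ℝ) (hH : ContDiff ℝ 2 H)
    (V : (Fin n → ℝ) → ℝ) (hV : ContDiff ℝ 2 V) (hV0 : ∀ x, V x ≠ 0)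
    (Htilde : (Fin n → ℝ) × (Fin n → ℝ) → ℝ)
    (hHt : ∀ z, Htilde z = H z / V z.1)
    (γ : ℝ → (Fin n → ℝ) × (Fin n → ℝ))
    (hγ : ∀ t : ℝ, HasDerivAt γ (hamVF Htilde (γ t)) t)
    (h0 : H (γ 0) = 0)
    (I : Set ℝ) (hI : I.OrdConnected) (h0I : (0 : ℝ) ∈ I)
    (τ : ℝ → ℝ) (hτ0 : τ 0 = 0)
    (hτ' : ∀ u ∈ I, HasDerivWithinAt τ (V ((γ (τ u)).1)) I u) :
    (∀ t : ℝ, H (γ t) = 0)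
      ∧ (∀ u ∈ I, HasDerivWithinAt (fun v => γ (τ v)) (hamVF H (γ (τ u))) I u) := by
  have hHteq : Htilde = fun w => H w * (V w.1)⁻¹ := funext fun w => by
    rw [hHt w, div_eq_mul_inv]
  subst hHteq
  have hHd : ∀ z, HasFDerivAt H (fderiv ℝ H z) z := fun z =>
    ((hH.differentiable two_ne_zero) z).hasFDerivAt
  have hVd : ∀ x, HasFDerivAt V (fderiv ℝ V x) x := fun x =>
    ((hV.differentiable two_ne_zero) x).hasFDerivAt
  have hWd : ∀ z : (Fin n → ℝ) × (Fin n → ℝ),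
      HasFDerivAt (fun w : (Fin n → ℝ) × (Fin n → ℝ) => V w.1)
        ((fderiv ℝ V z.1).comp (ContinuousLinearMap.fst ℝ _ _)) z := fun z =>
    (hVd z.1).comp z hasFDerivAt_fst
  have hInv : ∀ z : (Fin n → ℝ) × (Fin n → ℝ),
      HasFDerivAt (fun w : (Fin n → ℝ) × (Fin n → ℝ) => (V w.1)⁻¹)
        ((ContinuousLinearMap.smulRight (1 : ℝ →L[ℝ] ℝ) (-(V z.1 ^ 2)⁻¹)).comp
          ((fderiv ℝ V z.1).comp (ContinuousLinearMap.fst ℝ _ _))) z := fun z =>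
    (hasFDerivAt_inv (hV0 z.1)).comp z (hWd z)
  have hTd : ∀ z : (Fin n → ℝ) × (Fin n → ℝ),
      HasFDerivAt (fun w => H w * (V w.1)⁻¹)
        (H z • ((ContinuousLinearMap.smulRight (1 : ℝ →L[ℝ] ℝ) (-(V z.1 ^ 2)⁻¹)).comp
            ((fderiv ℝ V z.1).comp (ContinuousLinearMap.fst ℝ _ _)))
          + (V z.1)⁻¹ • fderiv ℝ H z) z := fun z =>
    (hHd z).mul (hInv z)
  have hpdp : ∀ (i : Fin n) z, pdp i (fun w => H w * (V w.1)⁻¹) z = (V z.1)⁻¹ * pdp i H z := by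
    intro i z
    rw [pdp, (hTd z).fderiv]
    simp [pdp, ContinuousLinearMap.add_apply, ContinuousLinearMap.smul_apply,
      ContinuousLinearMap.comp_apply, ContinuousLinearMap.smulRight_apply,
      ContinuousLinearMap.coe_fst', ContinuousLinearMap.one_apply, smul_eq_mul]
  have hpdx : ∀ (i : Fin n) z, pdx i (fun w => H w * (V w.1)⁻¹) z
      = (V z.1)⁻¹ * pdx i H z - H z * (V z.1 ^ 2)⁻¹ * pd i V z.1 := by
    intro i z
    rw [pdx, (hTd z).fderiv]
    simp only [ContinuousLinearMap.add_apply, ContinuousLinearMap.smul_apply,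
      ContinuousLinearMap.comp_apply, ContinuousLinearMap.smulRight_apply,
      ContinuousLinearMap.coe_fst', ContinuousLinearMap.one_apply, smul_eq_mul]
    rw [pdx, pd]
    ring
  -- derivative of H along γ
  have hpdpC : ∀ i : Fin n, Continuous fun z => pdp i H z := fun i =>
    (hH.continuous_fderiv two_ne_zero).clm_apply continuous_const
  have hpdVC : ∀ i : Fin n, Continuous fun x => pd i V x := fun i =>
    (hV.continuous_fderiv two_ne_zero).clm_apply continuous_const
  have hγC : Continuous γ := continuous_iff_continuousAt.2 fun t => (hγ t).continuousAt
  set g : ℝ → ℝ := fun t => (V (γ t).1 ^ 2)⁻¹ * ∑ i, pd i V (γ t).1 * pdp i H (γ t) with hgdef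
  have hgC : Continuous g := by
    apply Continuous.mul
    · exact (Continuous.pow ((hV.continuous.comp (continuous_fst.comp hγC))) 2).inv₀
        fun t => pow_ne_zero _ (hV0 _)
    · exact continuous_finset_sum _ fun i _ =>
        (((hpdVC i).comp (continuous_fst.comp hγC)).mul ((hpdpC i).comp hγC))
  have hfD : ∀ t, HasDerivAt (fun s => H (γ s)) (H (γ t) * g t) t := by
    intro t
    have h1 : HasDerivAt (fun s => H (γ s))
        (fderiv ℝ H (γ t) (hamVF (fun w => H w * (V w.1)⁻¹) (γ t))) t :=
      (hHd (γ t)).comp_hasDerivAt t (hγ t)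
    convert h1 using 1
    rw [hamVF, clm_apply_pair]
    have e1 : ∀ i : Fin n, fderiv ℝ H (γ t) ((Pi.single i 1 : Fin n → ℝ), (0 : Fin n → ℝ))
        = pdx i H (γ t) := fun i => rfl
    have e2 : ∀ i : Fin n, fderiv ℝ H (γ t) ((0 : Fin n → ℝ), (Pi.single i 1 : Fin n → ℝ))
        = pdp i H (γ t) := fun i => rfl
    simp only [e1, e2, hpdp, hpdx, hgdef]
    rw [← Finset.sum_add_distrib, Finset.mul_sum, Finset.mul_sum]
    refine Finset.sum_congr rfl fun i _ => ?_
    ring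
  have parta : ∀ t, H (γ t) = 0 := linODE (fun s => H (γ s)) g hgC hfD h0
  refine ⟨parta, ?_⟩
  intro u hu
  have key : V ((γ (τ u)).1) • hamVF (fun w => H w * (V w.1)⁻¹) (γ (τ u))
      = hamVF H (γ (τ u)) := by
    set z := γ (τ u) with hz
    have hz0 : H z = 0 := parta (τ u)
    refine Prod.ext ?_ ?_ <;> funext i <;>
      simp only [hamVF, Prod.smul_fst, Prod.smul_snd, Pi.smul_apply, smul_eq_mul,
        hpdp, hpdx, hz0]
    · field_simp [hV0 z.1]
    · field_simp [hV0 z.1]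
      ring
  have := (hγ (τ u)).scomp_hasDerivWithinAt u (hτ' u hu)
  rw [key] at this
  exact this
end

section
/- Let n ≥ 1. Let K : ℝⁿ → Matrix (Fin n) (Fin n) ℝ be a C¹ map with K(x) symmetric for every x, and let V, U, W_V, W_U : ℝⁿ → ℝ be C¹ with U nowhere zero. Define on ℝⁿ × ℝⁿ the functions G(x,p) = ∑_i p_i², A(x,p) = ∑_{i,j} K_{ij}(x) p_i p_j, and suppose that {G + V, A + W_V} = 0 and {G + U, A + W_U} = 0 identically (V, U, W_V, W_U regarded as functions of x only). Then the Stäckel transform H̃ := (G + V)/U admits the second-order integral F̃ := A + W_V + (1 − W_U)·H̃, i.e. {H̃, F̃} = 0 identically on ℝⁿ × ℝⁿ. -/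
open scoped BigOperators

/-! ### Auxiliary material -/

section DirectionalHelpers

variable {E : Type*} [NormedAddCommGroup E] [NormedSpace ℝ E]
variable {F G : E → ℝ} {z v : E}

lemma dd_add (hF : DifferentiableAt ℝ F z) (hG : DifferentiableAt ℝ G z) :
    fderiv ℝ (fun w => F w + G w) z v = fderiv ℝ F z v + fderiv ℝ G z v := by
  rw [fderiv_fun_add hF hG]; simp

lemma dd_mul (hF : DifferentiableAt ℝ F z) (hG : DifferentiableAt ℝ G z) :
    fderiv ℝ (fun w => F w * G w) z v = F z * fderiv ℝ G z v + G z * fderiv ℝ F z v := by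
  rw [fderiv_fun_mul hF hG]; simp

lemma dd_const_sub (hF : DifferentiableAt ℝ F z) (c : ℝ) :
    fderiv ℝ (fun w => c - F w) z v = -(fderiv ℝ F z v) := by
  have h1 : (fun w => c - F w) = fun w => (fun _ : E => c) w - F w := rfl
  rw [h1, fderiv_fun_sub (differentiableAt_const c) hF]; simp

lemma dd_inv (hF : DifferentiableAt ℝ F z) (h0 : F z ≠ 0) :
    fderiv ℝ (fun w => (F w)⁻¹) z v = -(fderiv ℝ F z v) / (F z)^2 := by
  have h1 : (fun w => (F w)⁻¹) = Inv.inv ∘ F := rfl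
  rw [h1, fderiv_comp z (differentiableAt_inv h0) hF]
  rw [ContinuousLinearMap.comp_apply, fderiv_inv' h0]
  rw [ContinuousLinearMap.neg_apply, ContinuousLinearMap.mulLeftRight_apply]
  rw [eq_div_iff (pow_ne_zero 2 h0)]
  field_simp

lemma diffAt_div (hF : DifferentiableAt ℝ F z) (hG : DifferentiableAt ℝ G z) (h0 : G z ≠ 0) :
    DifferentiableAt ℝ (fun w => F w / G w) z := by
  simp only [div_eq_mul_inv]; exact hF.mul (hG.inv h0)

lemma dd_div (hF : DifferentiableAt ℝ F z) (hG : DifferentiableAt ℝ G z) (h0 : G z ≠ 0) :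
    fderiv ℝ (fun w => F w / G w) z v
      = (fderiv ℝ F z v * G z - F z * fderiv ℝ G z v) / (G z)^2 := by
  have h1 : (fun w => F w / G w) = fun w => F w * (G w)⁻¹ := by
    funext w; rw [div_eq_mul_inv]
  rw [h1, dd_mul (G := fun w => (G w)⁻¹) hF (hG.inv h0), dd_inv hG h0]
  field_simp
  ring

end DirectionalHelpers

section PhaseHelpers

/-- phase space -/
abbrev Ph (n : ℕ) := (Fin n → ℝ) × (Fin n → ℝ)

variable {n : ℕ}

lemma dd_fst {f : (Fin n → ℝ) → ℝ} {z : Ph n} (hf : DifferentiableAt ℝ f z.1)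
    (v : Ph n) : fderiv ℝ (fun w : Ph n => f w.1) z v = fderiv ℝ f z.1 v.1 := by
  have h1 : (fun w : Ph n => f w.1) = f ∘ Prod.fst := rfl
  rw [h1, fderiv_comp z hf differentiableAt_fst]
  simp [fderiv_fst]

lemma dd_snd {f : (Fin n → ℝ) → ℝ} {z : Ph n} (hf : DifferentiableAt ℝ f z.2)
    (v : Ph n) : fderiv ℝ (fun w : Ph n => f w.2) z v = fderiv ℝ f z.2 v.2 := by
  have h1 : (fun w : Ph n => f w.2) = f ∘ Prod.snd := rfl
  rw [h1, fderiv_comp z hf differentiableAt_snd]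
  simp [fderiv_snd]

/-- the free Hamiltonian -/
noncomputable def Gf (n : ℕ) : Ph n → ℝ := fun z => ∑ i : Fin n, (z.2 i) ^ 2

/-- the quadratic part of the integral -/
noncomputable def Af (n : ℕ) (K : (Fin n → ℝ) → Matrix (Fin n) (Fin n) ℝ) : Ph n → ℝ :=
  fun z => ∑ i : Fin n, ∑ j : Fin n, K z.1 i j * z.2 i * z.2 j

lemma diff_proj (i : Fin n) : Differentiable ℝ (fun x : Fin n → ℝ => x i) :=
  (ContinuousLinearMap.proj i : (Fin n → ℝ) →L[ℝ] ℝ).differentiable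

lemma diff_G : Differentiable ℝ (Gf n) := by
  apply Differentiable.fun_sum
  intro i _
  exact ((diff_proj i).comp differentiable_snd).pow 2

lemma diff_A {K : (Fin n → ℝ) → Matrix (Fin n) (Fin n) ℝ}
    (hK : ∀ i j, ContDiff ℝ 1 (fun x => K x i j)) : Differentiable ℝ (Af n K) := by
  apply Differentiable.fun_sum; intro i _
  apply Differentiable.fun_sum; intro j _
  exact ((((hK i j).differentiable one_ne_zero).comp differentiable_fst).mul
    ((diff_proj i).comp differentiable_snd)).mul ((diff_proj j).comp differentiable_snd)

/-- the scaling map `(x, p) ↦ (x, 2p)` -/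
noncomputable def Sc (n : ℕ) : Ph n →L[ℝ] Ph n :=
  (ContinuousLinearMap.fst ℝ (Fin n → ℝ) (Fin n → ℝ)).prod
    (2 • ContinuousLinearMap.snd ℝ (Fin n → ℝ) (Fin n → ℝ))

lemma Sc_apply (z : Ph n) : Sc n z = (z.1, 2 • z.2) := rfl

lemma fderiv_scale {F : Ph n → ℝ} (hF : Differentiable ℝ F)
    (hhom : ∀ z, F (Sc n z) = 4 * F z) (z v : Ph n) :
    fderiv ℝ F (Sc n z) (Sc n v) = 4 * fderiv ℝ F z v := by
  have h1 : fderiv ℝ (F ∘ Sc n) z = (fderiv ℝ F (Sc n z)).comp (Sc n : Ph n →L[ℝ] Ph n) :=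
    ((hF (Sc n z)).hasFDerivAt.comp z (Sc n).hasFDerivAt).fderiv
  have h2 : (F ∘ Sc n) = fun z => 4 * F z := funext hhom
  have h3 : fderiv ℝ (fun z => 4 * F z) z = (4:ℝ) • fderiv ℝ F z := fderiv_const_mul (hF z) 4
  have := congrArg (fun (L : Ph n →L[ℝ] ℝ) => L v) (h1.symm.trans (by rw [h2, h3]))
  simpa using this

lemma pdx_scale {F : Ph n → ℝ} (hF : Differentiable ℝ F)
    (hhom : ∀ z, F (Sc n z) = 4 * F z) (i : Fin n) (z : Ph n) :
    pdx i F (Sc n z) = 4 * pdx i F z := by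
  have h0 : Sc n ((Pi.single i 1, 0) : Ph n) = (Pi.single i 1, 0) := by
    simp [Sc_apply]
  have := fderiv_scale hF hhom z (Pi.single i 1, 0)
  rw [h0] at this
  simpa [pdx] using this

lemma pdp_scale {F : Ph n → ℝ} (hF : Differentiable ℝ F)
    (hhom : ∀ z, F (Sc n z) = 4 * F z) (i : Fin n) (z : Ph n) :
    pdp i F (Sc n z) = 2 * pdp i F z := by
  have h0 : Sc n ((0, Pi.single i 1) : Ph n) = (2 : ℝ) • ((0, Pi.single i 1) : Ph n) := by
    refine Prod.ext (by simp [Sc_apply]) ?_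
    funext j
    simp [Sc_apply]
  have h := fderiv_scale hF hhom z (0, Pi.single i 1)
  rw [h0, (fderiv ℝ F (Sc n z)).map_smul] at h
  unfold pdp
  have h2 : (2:ℝ) * fderiv ℝ F (Sc n z) (0, Pi.single i 1)
      = 4 * fderiv ℝ F z (0, Pi.single i 1) := by
    simpa using h
  linarith

lemma hom_G : ∀ z : Ph n, Gf n (Sc n z) = 4 * Gf n z := by
  intro z
  simp only [Gf, Sc_apply, Finset.mul_sum]
  refine Finset.sum_congr rfl fun i _ => ?_
  simp [smul_eq_mul]
  ring

lemma hom_A {K : (Fin n → ℝ) → Matrix (Fin n) (Fin n) ℝ} :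
    ∀ z : Ph n, Af n K (Sc n z) = 4 * Af n K z := by
  intro z
  simp only [Af, Sc_apply, Finset.mul_sum]
  refine Finset.sum_congr rfl fun i _ => ?_
  refine Finset.sum_congr rfl fun j _ => ?_
  simp [smul_eq_mul]
  ring

lemma pdx_G_zero (i : Fin n) (z : Ph n) : pdx i (Gf n) z = 0 := by
  have hg : Differentiable ℝ (fun p : Fin n → ℝ => ∑ i : Fin n, (p i)^2) := by
    apply Differentiable.fun_sum
    intro i _
    exact (diff_proj i).pow 2
  have h1 : (Gf n) = fun w : Ph n => (fun p : Fin n → ℝ => ∑ i : Fin n, (p i)^2) w.2 := rfl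
  unfold pdx
  rw [h1, dd_snd (hg z.2)]
  simp

/-- expansion of the Poisson bracket of a natural Hamiltonian against a
second order expression -/
lemma expand_int {K : (Fin n → ℝ) → Matrix (Fin n) (Fin n) ℝ}
    (hK : ∀ i j, ContDiff ℝ 1 (fun x => K x i j))
    {Y W : (Fin n → ℝ) → ℝ} (hY : ContDiff ℝ 1 Y) (hW : ContDiff ℝ 1 W) (z : Ph n) :
    poisson (fun w => Gf n w + Y w.1) (fun w => Af n K w + W w.1) z
      = ∑ i : Fin n, (pd i Y z.1 * pdp i (Af n K) z
          - pdp i (Gf n) z * (pdx i (Af n K) z + pd i W z.1)) := by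
  have hYd := hY.differentiable one_ne_zero
  have hWd := hW.differentiable one_ne_zero
  have dY : ∀ w : Ph n, DifferentiableAt ℝ (fun w : Ph n => Y w.1) w :=
    fun w => (hYd w.1).comp w differentiableAt_fst
  have dW : ∀ w : Ph n, DifferentiableAt ℝ (fun w : Ph n => W w.1) w :=
    fun w => (hWd w.1).comp w differentiableAt_fst
  unfold poisson
  refine Finset.sum_congr rfl fun i _ => ?_
  have e1 : pdx i (fun w => Gf n w + Y w.1) z = pd i Y z.1 := by
    unfold pdx
    rw [dd_add (diff_G z) (dY z), dd_fst (hYd z.1)]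
    have := pdx_G_zero i z
    unfold pdx at this
    rw [this]
    simp [pd]
  have e2 : pdp i (fun w => Gf n w + Y w.1) z = pdp i (Gf n) z := by
    unfold pdp
    rw [dd_add (diff_G z) (dY z), dd_fst (hYd z.1)]
    simp
  have e3 : pdx i (fun w => Af n K w + W w.1) z = pdx i (Af n K) z + pd i W z.1 := by
    unfold pdx
    rw [dd_add (diff_A hK z) (dW z), dd_fst (hWd z.1)]
    simp [pd, pdx]
  have e4 : pdp i (fun w => Af n K w + W w.1) z = pdp i (Af n K) z := by
    unfold pdp
    rw [dd_add (diff_A hK z) (dW z), dd_fst (hWd z.1)]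
    simp
  rw [e1, e2, e3, e4]

end PhaseHelpers

theorem stmt9 (n : ℕ) (hn : 1 ≤ n)
    (K : (Fin n → ℝ) → Matrix (Fin n) (Fin n) ℝ)
    (hK : ∀ i j, ContDiff ℝ 1 (fun x => K x i j))
    (hKsymm : ∀ x, (K x).IsSymm)
    (V U WV WU : (Fin n → ℝ) → ℝ)
    (hV : ContDiff ℝ 1 V) (hU : ContDiff ℝ 1 U)
    (hWV : ContDiff ℝ 1 WV) (hWU : ContDiff ℝ 1 WU)
    (hU0 : ∀ x, U x ≠ 0)
    (G A : (Fin n → ℝ) × (Fin n → ℝ) → ℝ)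
    (hG : ∀ z, G z = ∑ i : Fin n, (z.2 i) ^ 2)
    (hA : ∀ z, A z = ∑ i : Fin n, ∑ j : Fin n, K z.1 i j * z.2 i * z.2 j)
    (hintV : ∀ z, poisson (fun w => G w + V w.1) (fun w => A w + WV w.1) z = 0)
    (hintU : ∀ z, poisson (fun w => G w + U w.1) (fun w => A w + WU w.1) z = 0)
    (Htilde Ftilde : (Fin n → ℝ) × (Fin n → ℝ) → ℝ)
    (hHt : ∀ z, Htilde z = (G z + V z.1) / U z.1)
    (hFt : ∀ z, Ftilde z = A z + WV z.1 + (1 - WU z.1) * Htilde z) :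
    ∀ z : (Fin n → ℝ) × (Fin n → ℝ), poisson Htilde Ftilde z = 0 := by
  -- identify G and A with the concrete functions
  have hGe : G = Gf n := funext fun z => by rw [hG]; rfl
  subst hGe
  have hAe : A = Af n K := funext fun z => by rw [hA]; rfl
  subst hAe
  have hHte : Htilde = fun w : Ph n => (Gf n w + V w.1) / U w.1 := funext fun z => by rw [hHt]
  subst hHte
  have hFte : Ftilde = fun w : Ph n =>
      Af n K w + WV w.1 + (1 - WU w.1) * ((Gf n w + V w.1) / U w.1) :=
    funext fun z => by rw [hFt]
  subst hFte
  -- differentiability package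
  have hVd := hV.differentiable one_ne_zero
  have hUd := hU.differentiable one_ne_zero
  have hWVd := hWV.differentiable one_ne_zero
  have hWUd := hWU.differentiable one_ne_zero
  have hAd : Differentiable ℝ (Af n K) := diff_A hK
  have dV : ∀ w : Ph n, DifferentiableAt ℝ (fun w : Ph n => V w.1) w :=
    fun w => (hVd w.1).comp w differentiableAt_fst
  have dU : ∀ w : Ph n, DifferentiableAt ℝ (fun w : Ph n => U w.1) w :=
    fun w => (hUd w.1).comp w differentiableAt_fst
  have dWV : ∀ w : Ph n, DifferentiableAt ℝ (fun w : Ph n => WV w.1) w :=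
    fun w => (hWVd w.1).comp w differentiableAt_fst
  have dWU : ∀ w : Ph n, DifferentiableAt ℝ (fun w : Ph n => WU w.1) w :=
    fun w => (hWUd w.1).comp w differentiableAt_fst
  have dGV : ∀ w : Ph n, DifferentiableAt ℝ (fun w : Ph n => Gf n w + V w.1) w :=
    fun w => (diff_G w).add (dV w)
  have dHt : ∀ w : Ph n, DifferentiableAt ℝ (fun w : Ph n => (Gf n w + V w.1) / U w.1) w :=
    fun w => diffAt_div (dGV w) (dU w) (hU0 w.1)
  have dOneWU : ∀ w : Ph n, DifferentiableAt ℝ (fun w : Ph n => 1 - WU w.1) w :=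
    fun w => (differentiableAt_const 1).sub (dWU w)
  have dAWV : ∀ w : Ph n, DifferentiableAt ℝ (fun w : Ph n => Af n K w + WV w.1) w :=
    fun w => (hAd w).add (dWV w)
  have dProd : ∀ w : Ph n, DifferentiableAt ℝ
      (fun w : Ph n => (1 - WU w.1) * ((Gf n w + V w.1) / U w.1)) w :=
    fun w => (dOneWU w).mul (dHt w)
  -- integrals of motion, in expanded form
  have SV : ∀ w : Ph n, ∑ i : Fin n, (pd i V w.1 * pdp i (Af n K) w
      - pdp i (Gf n) w * (pdx i (Af n K) w + pd i WV w.1)) = 0 :=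
    fun w => by rw [← expand_int hK hV hWV w]; exact hintV w
  have SU : ∀ w : Ph n, ∑ i : Fin n, (pd i U w.1 * pdp i (Af n K) w
      - pdp i (Gf n) w * (pdx i (Af n K) w + pd i WU w.1)) = 0 :=
    fun w => by rw [← expand_int hK hU hWU w]; exact hintU w
  -- the cubic part of the U-integral relation vanishes separately (scaling argument)
  have Cz : ∀ w : Ph n, ∑ i : Fin n, pdp i (Gf n) w * pdx i (Af n K) w = 0 := by
    intro w
    have h1 := SU w
    have h2 := SU (Sc n w)
    have e2 : ∑ i : Fin n, (pd i U (Sc n w).1 * pdp i (Af n K) (Sc n w)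
        - pdp i (Gf n) (Sc n w) * (pdx i (Af n K) (Sc n w) + pd i WU (Sc n w).1))
        = 2 * (∑ i : Fin n, (pd i U w.1 * pdp i (Af n K) w
            - pdp i (Gf n) w * (pdx i (Af n K) w + pd i WU w.1)))
          - 6 * (∑ i : Fin n, pdp i (Gf n) w * pdx i (Af n K) w) := by
      rw [Finset.mul_sum, Finset.mul_sum, ← Finset.sum_sub_distrib]
      refine Finset.sum_congr rfl fun i _ => ?_
      rw [pdp_scale hAd hom_A, pdp_scale diff_G hom_G, pdx_scale hAd hom_A,
        (show (Sc n w).1 = w.1 from rfl)]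
      ring
    rw [e2, h1] at h2
    linarith
  -- now the main computation
  intro z
  have hUz := hU0 z.1
  have key : poisson (fun w : Ph n => (Gf n w + V w.1) / U w.1)
      (fun w : Ph n => Af n K w + WV w.1 + (1 - WU w.1) * ((Gf n w + V w.1) / U w.1)) z
      = (1 / U z.1) * (∑ i : Fin n, (pd i V z.1 * pdp i (Af n K) z
          - pdp i (Gf n) z * (pdx i (Af n K) z + pd i WV z.1)))
        - (((Gf n z + V z.1) / U z.1) / U z.1) * (∑ i : Fin n, (pd i U z.1 * pdp i (Af n K) z
          - pdp i (Gf n) z * (pdx i (Af n K) z + pd i WU z.1)))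
        - (((Gf n z + V z.1) / U z.1) / U z.1)
            * (∑ i : Fin n, pdp i (Gf n) z * pdx i (Af n K) z) := by
    unfold poisson
    rw [Finset.mul_sum, Finset.mul_sum, Finset.mul_sum,
      ← Finset.sum_sub_distrib, ← Finset.sum_sub_distrib]
    refine Finset.sum_congr rfl fun i _ => ?_
    -- computing the four derivatives
    have EpxHt : pdx i (fun w : Ph n => (Gf n w + V w.1) / U w.1) z
        = (pd i V z.1 * U z.1 - (Gf n z + V z.1) * pd i U z.1) / (U z.1)^2 := by
      unfold pdx
      rw [dd_div (dGV z) (dU z) hUz, dd_add (diff_G z) (dV z),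
        dd_fst (hVd z.1), dd_fst (hUd z.1)]
      have h0 := pdx_G_zero i z
      unfold pdx at h0
      rw [h0]
      simp [pd]
    have EppHt : pdp i (fun w : Ph n => (Gf n w + V w.1) / U w.1) z
        = pdp i (Gf n) z * U z.1 / (U z.1)^2 := by
      unfold pdp
      rw [dd_div (dGV z) (dU z) hUz, dd_add (diff_G z) (dV z),
        dd_fst (hVd z.1), dd_fst (hUd z.1)]
      simp [pdp]
    have EpxFt : pdx i (fun w : Ph n =>
        Af n K w + WV w.1 + (1 - WU w.1) * ((Gf n w + V w.1) / U w.1)) z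
        = (pdx i (Af n K) z + pd i WV z.1)
          + ((1 - WU z.1) * ((pd i V z.1 * U z.1 - (Gf n z + V z.1) * pd i U z.1) / (U z.1)^2)
            + ((Gf n z + V z.1) / U z.1) * (-(pd i WU z.1))) := by
      unfold pdx
      rw [dd_add (dAWV z) (dProd z), dd_add (hAd z) (dWV z),
        dd_mul (dOneWU z) (dHt z), dd_const_sub (dWU z),
        dd_fst (hWVd z.1), dd_fst (hWUd z.1)]
      have h1 := EpxHt
      unfold pdx at h1
      rw [h1]
      simp [pd, pdx]
    have EppFt : pdp i (fun w : Ph n =>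
        Af n K w + WV w.1 + (1 - WU w.1) * ((Gf n w + V w.1) / U w.1)) z
        = pdp i (Af n K) z + (1 - WU z.1) * (pdp i (Gf n) z * U z.1 / (U z.1)^2) := by
      unfold pdp
      rw [dd_add (dAWV z) (dProd z), dd_add (hAd z) (dWV z),
        dd_mul (dOneWU z) (dHt z), dd_const_sub (dWU z),
        dd_fst (hWVd z.1), dd_fst (hWUd z.1)]
      have h1 := EppHt
      unfold pdp at h1
      rw [h1]
      simp
    rw [EpxHt, EppHt, EpxFt, EppFt]
    field_simp
    ring
  rw [key, SV z, SU z, Cz z]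
  ring
end

section
/- Let n ≥ 2 and μ₀, μ_{n+1} ∈ ℝ, μ = (μ_1,…,μ_n) ∈ ℝⁿ. On P × ℝⁿ with P = {x ∈ ℝⁿ : x^i > 0 for all i}, define the Smorodinski–Winternitz Hamiltonian H(x,p) = ∑_i p_i² + μ₀ ∑_i (x^i)² + ∑_i μ_i/(x^i)² + μ_{n+1}. Then for every pair of distinct indices i, j ∈ {1,…,n}, the function G_{ij}(x,p) = (x^i p_j − x^j p_i)² + μ_i (x^j/x^i)² + μ_j (x^i/x^j)² satisfies {G_{ij}, H} = 0 at every point of P × ℝⁿ. -/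
open scoped BigOperators

namespace SWaux

variable {n : ℕ}

noncomputable def XL (n : ℕ) (k : Fin n) : ((Fin n → ℝ) × (Fin n → ℝ)) →L[ℝ] ℝ :=
  (ContinuousLinearMap.proj k).comp (ContinuousLinearMap.fst ℝ (Fin n → ℝ) (Fin n → ℝ))

noncomputable def PL (n : ℕ) (k : Fin n) : ((Fin n → ℝ) × (Fin n → ℝ)) →L[ℝ] ℝ :=
  (ContinuousLinearMap.proj k).comp (ContinuousLinearMap.snd ℝ (Fin n → ℝ) (Fin n → ℝ))

lemma hasX (k : Fin n) (z : (Fin n → ℝ) × (Fin n → ℝ)) :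
    HasFDerivAt (fun w : (Fin n → ℝ) × (Fin n → ℝ) => w.1 k) (XL n k) z :=
  (XL n k).hasFDerivAt

lemma hasP (k : Fin n) (z : (Fin n → ℝ) × (Fin n → ℝ)) :
    HasFDerivAt (fun w : (Fin n → ℝ) × (Fin n → ℝ) => w.2 k) (PL n k) z :=
  (PL n k).hasFDerivAt

@[simp] lemma XL_apply (k : Fin n) (v : (Fin n → ℝ) × (Fin n → ℝ)) : XL n k v = v.1 k := rfl
@[simp] lemma PL_apply (k : Fin n) (v : (Fin n → ℝ) × (Fin n → ℝ)) : PL n k v = v.2 k := rfl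

lemma pdx_eq {F : (Fin n → ℝ) × (Fin n → ℝ) → ℝ} {L : ((Fin n → ℝ) × (Fin n → ℝ)) →L[ℝ] ℝ} {z} (h : HasFDerivAt F L z) (k : Fin n) :
    pdx k F z = L (Pi.single k 1, 0) := by rw [pdx, h.fderiv]

lemma pdp_eq {F : (Fin n → ℝ) × (Fin n → ℝ) → ℝ} {L : ((Fin n → ℝ) × (Fin n → ℝ)) →L[ℝ] ℝ} {z} (h : HasFDerivAt F L z) (k : Fin n) :
    pdp k F z = L (0, Pi.single k 1) := by rw [pdp, h.fderiv]

end SWaux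

open SWaux


theorem stmt12 (n : ℕ) (hn : 2 ≤ n)
    (μ₀ μlast : ℝ) (μ : Fin n → ℝ)
    (H : (Fin n → ℝ) × (Fin n → ℝ) → ℝ)
    (hH : ∀ z, H z = ∑ i : Fin n, (z.2 i) ^ 2
        + μ₀ * ∑ i : Fin n, (z.1 i) ^ 2 + ∑ i : Fin n, μ i / (z.1 i) ^ 2 + μlast) :
    ∀ i j : Fin n, i ≠ j → ∀ z : (Fin n → ℝ) × (Fin n → ℝ), (∀ k : Fin n, 0 < z.1 k) →
      poisson (fun w => (w.1 i * w.2 j - w.1 j * w.2 i) ^ 2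
        + μ i * (w.1 j / w.1 i) ^ 2 + μ j * (w.1 i / w.1 j) ^ 2) H z = 0 := by
  intro i j hij z hz
  have hx : ∀ k, z.1 k ≠ 0 := fun k => (hz k).ne'
  -- rewrite H
  have hHe : H = fun w => ∑ k : Fin n, w.2 k * w.2 k
      + μ₀ * ∑ k : Fin n, w.1 k * w.1 k
      + ∑ k : Fin n, μ k * ((w.1 k)⁻¹ * (w.1 k)⁻¹) + μlast := by
    funext w
    rw [hH]
    congr 1
    congr 1
    · congr 1
      · exact Finset.sum_congr rfl fun k _ => by ring
      · congr 1
        exact Finset.sum_congr rfl fun k _ => by ring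
    · exact Finset.sum_congr rfl fun k _ => by rw [pow_two, div_eq_mul_inv, mul_inv]
  rw [hHe]
  have hinv : ∀ k, HasFDerivAt (fun w : (Fin n → ℝ) × (Fin n → ℝ) => (w.1 k)⁻¹)
      (((1 : ℝ →L[ℝ] ℝ).smulRight (-(z.1 k ^ 2)⁻¹)).comp (XL n k)) z :=
    fun k => (hasFDerivAt_inv (hx k)).comp z (hasX k z)
  have hHd := ((((HasFDerivAt.fun_sum (u := Finset.univ)
      (fun (k : Fin n) _ => (hasP k z).fun_mul (hasP k z))).fun_add
      ((HasFDerivAt.fun_sum (u := Finset.univ)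
      (fun (k : Fin n) _ => (hasX k z).fun_mul (hasX k z))).const_mul μ₀)).fun_add
      (HasFDerivAt.fun_sum (u := Finset.univ)
      (fun (k : Fin n) _ => ((hinv k).fun_mul (hinv k)).const_mul (μ k)))).add_const μlast)
  have hHx : ∀ k, pdx k (fun w : (Fin n → ℝ) × (Fin n → ℝ) => ∑ k : Fin n, w.2 k * w.2 k
      + μ₀ * ∑ k : Fin n, w.1 k * w.1 k
      + ∑ k : Fin n, μ k * ((w.1 k)⁻¹ * (w.1 k)⁻¹) + μlast) z
      = 2 * μ₀ * z.1 k - 2 * μ k / z.1 k ^ 3 := by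
    intro k
    refine (pdx_eq hHd k).trans ?_
    simp only [ContinuousLinearMap.add_apply, ContinuousLinearMap.smul_apply,
      ContinuousLinearMap.sum_apply, ContinuousLinearMap.comp_apply,
      ContinuousLinearMap.smulRight_apply, ContinuousLinearMap.one_apply,
      XL_apply, PL_apply, Pi.single_apply, Pi.zero_apply, smul_eq_mul]
    rw [Finset.sum_eq_single_of_mem k (Finset.mem_univ k) (fun l _ hl => by simp [hl]),
        Finset.sum_eq_single_of_mem k (Finset.mem_univ k) (fun l _ hl => by simp [hl]),
        Finset.sum_eq_single_of_mem k (Finset.mem_univ k) (fun l _ hl => by simp [hl])]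
    simp
    field_simp
    ring
  have hHp : ∀ k, pdp k (fun w : (Fin n → ℝ) × (Fin n → ℝ) => ∑ k : Fin n, w.2 k * w.2 k
      + μ₀ * ∑ k : Fin n, w.1 k * w.1 k
      + ∑ k : Fin n, μ k * ((w.1 k)⁻¹ * (w.1 k)⁻¹) + μlast) z
      = 2 * z.2 k := by
    intro k
    refine (pdp_eq hHd k).trans ?_
    simp only [ContinuousLinearMap.add_apply, ContinuousLinearMap.smul_apply,
      ContinuousLinearMap.sum_apply, ContinuousLinearMap.comp_apply,
      ContinuousLinearMap.smulRight_apply, ContinuousLinearMap.one_apply,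
      XL_apply, PL_apply, Pi.single_apply, Pi.zero_apply, smul_eq_mul]
    rw [Finset.sum_eq_single_of_mem k (Finset.mem_univ k) (fun l _ hl => by simp [hl]),
        Finset.sum_eq_single_of_mem k (Finset.mem_univ k) (fun l _ hl => by simp [hl]),
        Finset.sum_eq_single_of_mem k (Finset.mem_univ k) (fun l _ hl => by simp [hl])]
    simp
    ring
  -- rewrite G
  have hGe : (fun w : (Fin n → ℝ) × (Fin n → ℝ) => (w.1 i * w.2 j - w.1 j * w.2 i) ^ 2
        + μ i * (w.1 j / w.1 i) ^ 2 + μ j * (w.1 i / w.1 j) ^ 2)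
      = fun w => (w.1 i * w.2 j - w.1 j * w.2 i) * (w.1 i * w.2 j - w.1 j * w.2 i)
        + μ i * (w.1 j * (w.1 i)⁻¹ * (w.1 j * (w.1 i)⁻¹))
        + μ j * (w.1 i * (w.1 j)⁻¹ * (w.1 i * (w.1 j)⁻¹)) := by
    funext w
    rw [pow_two, pow_two, pow_two, div_eq_mul_inv, div_eq_mul_inv]
  rw [hGe]
  have hGd := ((((((hasX i z).fun_mul (hasP j z)).fun_sub ((hasX j z).fun_mul (hasP i z))).fun_mul
      (((hasX i z).fun_mul (hasP j z)).fun_sub ((hasX j z).fun_mul (hasP i z)))).fun_add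
      ((((hasX j z).fun_mul (hinv i)).fun_mul ((hasX j z).fun_mul (hinv i))).const_mul (μ i))).fun_add
      ((((hasX i z).fun_mul (hinv j)).fun_mul ((hasX i z).fun_mul (hinv j))).const_mul (μ j)))
  set A : ℝ := z.1 i * z.2 j - z.1 j * z.2 i with hA
  have hGx : ∀ k, pdx k (fun w : (Fin n → ℝ) × (Fin n → ℝ) =>
        (w.1 i * w.2 j - w.1 j * w.2 i) * (w.1 i * w.2 j - w.1 j * w.2 i)
        + μ i * (w.1 j * (w.1 i)⁻¹ * (w.1 j * (w.1 i)⁻¹))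
        + μ j * (w.1 i * (w.1 j)⁻¹ * (w.1 i * (w.1 j)⁻¹))) z
      = 2 * A * ((if i = k then 1 else 0) * z.2 j - (if j = k then 1 else 0) * z.2 i)
        + 2 * μ i * (z.1 j * (z.1 i)⁻¹) * ((if j = k then 1 else 0) * (z.1 i)⁻¹
            - z.1 j * (z.1 i ^ 2)⁻¹ * (if i = k then 1 else 0))
        + 2 * μ j * (z.1 i * (z.1 j)⁻¹) * ((if i = k then 1 else 0) * (z.1 j)⁻¹
            - z.1 i * (z.1 j ^ 2)⁻¹ * (if j = k then 1 else 0)) := by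
    intro k
    refine (pdx_eq hGd k).trans ?_
    simp only [ContinuousLinearMap.add_apply, ContinuousLinearMap.smul_apply,
      ContinuousLinearMap.sub_apply, ContinuousLinearMap.comp_apply,
      ContinuousLinearMap.smulRight_apply, ContinuousLinearMap.one_apply,
      XL_apply, PL_apply, Pi.single_apply, Pi.zero_apply, smul_eq_mul]
    ring
  have hGp : ∀ k, pdp k (fun w : (Fin n → ℝ) × (Fin n → ℝ) =>
        (w.1 i * w.2 j - w.1 j * w.2 i) * (w.1 i * w.2 j - w.1 j * w.2 i)
        + μ i * (w.1 j * (w.1 i)⁻¹ * (w.1 j * (w.1 i)⁻¹))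
        + μ j * (w.1 i * (w.1 j)⁻¹ * (w.1 i * (w.1 j)⁻¹))) z
      = 2 * A * (z.1 i * (if j = k then 1 else 0) - z.1 j * (if i = k then 1 else 0)) := by
    intro k
    refine (pdp_eq hGd k).trans ?_
    simp only [ContinuousLinearMap.add_apply, ContinuousLinearMap.smul_apply,
      ContinuousLinearMap.sub_apply, ContinuousLinearMap.comp_apply,
      ContinuousLinearMap.smulRight_apply, ContinuousLinearMap.one_apply,
      XL_apply, PL_apply, Pi.single_apply, Pi.zero_apply, smul_eq_mul]
    ring
  -- assemble
  rw [poisson]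
  rw [← Finset.sum_subset (Finset.subset_univ ({i, j} : Finset (Fin n)))
      (fun k _ hk => ?_), Finset.sum_pair hij]
  · rw [hGx, hGx, hGp, hGp, hHx, hHx, hHp, hHp]
    simp only [if_pos rfl, if_neg hij, if_neg hij.symm]
    field_simp [hx i, hx j]
    ring
  · simp only [Finset.mem_insert, Finset.mem_singleton, not_or] at hk
    rw [hGx, hGp, hHx, hHp]
    rw [if_neg (fun h => hk.1 h.symm), if_neg (fun h => hk.2 h.symm)]
    ring
end
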